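/- Fix positive reals λᵢ, μᵢ for i = 1,…,n, fix α ∈ (0,1), fix an index j, and fix xᵢ ∈ [0,1] for all i ≠ j. Define h(xⱼ) = (Σᵢ λᵢxᵢ/μᵢ²)·(Σᵢ λᵢxᵢ) / (α² − α·Σᵢ λᵢxᵢ/μᵢ) + (Σᵢ λᵢ(1−xᵢ)/μᵢ²)·(Σᵢ λᵢ(1−xᵢ)) / ((1−α)² − (1−α)·Σᵢ λᵢ(1−xᵢ)/μᵢ). Then h is convex in xⱼ on the set of xⱼ ∈ [0,1] for which Σᵢ λᵢxᵢ/μᵢ < α and Σᵢ λᵢ(1−xᵢ)/μᵢ < 1−α. -/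

import Mathlib

/-- Convex combination of two values below a threshold stays below it. -/
lemma comb_lt_aux {x y t a b : ℝ} (hx : x < t) (hy : y < t) (ha : 0 ≤ a) (hb : 0 ≤ b)
    (hab : a + b = 1) : a * x + b * y < t := by
  rcases eq_or_lt_of_le ha with h | h
  · have hb1 : b = 1 := by linarith
    rw [← h, hb1]; simpa using hy
  · have h1 : a * x < a * t := mul_lt_mul_of_pos_left hx h
    have h2 : b * y ≤ b * t := mul_le_mul_of_nonneg_left hy.le hb
    have h3 : a * t + b * t = t := by rw [← add_mul, hab, one_mul]
    linarith

/-- Key lemma: a product of two affine functions divided by a positive affine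
function is convex, provided the product of "cross determinants" is nonneg. -/
lemma keylem_aux (a0 a1 b0 b1 d0 d1 : ℝ) (S : Set ℝ) (hS : Convex ℝ S)
    (hD : ∀ v ∈ S, 0 < d0 + d1 * v)
    (hE : 0 ≤ (a1 * d0 - a0 * d1) * (b1 * d0 - b0 * d1)) :
    ConvexOn ℝ S (fun v => (a0 + a1 * v) * (b0 + b1 * v) / (d0 + d1 * v)) := by
  refine ⟨hS, fun p hp q hq a b ha hb hab => ?_⟩
  have hDp := hD p hp
  have hDq := hD q hq
  have hDz := hD _ (hS hp hq ha hb hab)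
  simp only [smul_eq_mul] at hDz ⊢
  rw [div_le_iff₀ hDz]
  have hb' : b = 1 - a := by linarith
  subst hb'
  have hcomb : a * ((a0 + a1 * p) * (b0 + b1 * p) / (d0 + d1 * p)) +
      (1 - a) * ((a0 + a1 * q) * (b0 + b1 * q) / (d0 + d1 * q)) =
      (a * ((a0 + a1 * p) * (b0 + b1 * p)) * (d0 + d1 * q) +
       (1 - a) * ((a0 + a1 * q) * (b0 + b1 * q)) * (d0 + d1 * p)) /
        ((d0 + d1 * p) * (d0 + d1 * q)) := by
    rw [mul_div_assoc', mul_div_assoc', div_add_div _ _ hDp.ne' hDq.ne']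
    ring
  rw [hcomb, div_mul_eq_mul_div, le_div_iff₀ (mul_pos hDp hDq)]
  have key : (a * ((a0 + a1 * p) * (b0 + b1 * p)) * (d0 + d1 * q) +
      (1 - a) * ((a0 + a1 * q) * (b0 + b1 * q)) * (d0 + d1 * p)) *
      (d0 + d1 * (a * p + (1 - a) * q)) -
      (a0 + a1 * (a * p + (1 - a) * q)) * (b0 + b1 * (a * p + (1 - a) * q)) *
      ((d0 + d1 * p) * (d0 + d1 * q)) =
      a * (1 - a) * (p - q) ^ 2 * ((a1 * d0 - a0 * d1) * (b1 * d0 - b0 * d1)) := by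
    ring
  nlinarith [mul_nonneg (mul_nonneg (mul_nonneg ha (by linarith : (0:ℝ) ≤ 1 - a))
    (sq_nonneg (p - q))) hE]

set_option maxHeartbeats 2000000 in
/-- For fixed `α` and fixed routing of the other types, the two-queue expected
waiting time is convex in the routing probability `x j` on the stable region. -/
theorem stmt_3 (n : ℕ) (lam mu : Fin n → ℝ) (hlam : ∀ i, 0 < lam i)
    (hmu : ∀ i, 0 < mu i) (α : ℝ) (hα : α ∈ Set.Ioo (0 : ℝ) 1)
    (j : Fin n) (x : Fin n → ℝ) (hx : ∀ i, i ≠ j → x i ∈ Set.Icc (0 : ℝ) 1) :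
    ConvexOn ℝ
      {v : ℝ | v ∈ Set.Icc (0 : ℝ) 1 ∧
        (∑ i, lam i * Function.update x j v i / mu i) < α ∧
        (∑ i, lam i * (1 - Function.update x j v i) / mu i) < 1 - α}
      (fun v : ℝ =>
        (∑ i, lam i * Function.update x j v i / (mu i) ^ 2) *
            (∑ i, lam i * Function.update x j v i) /
            (α ^ 2 - α * ∑ i, lam i * Function.update x j v i / mu i) +
          (∑ i, lam i * (1 - Function.update x j v i) / (mu i) ^ 2) *
            (∑ i, lam i * (1 - Function.update x j v i)) /
            ((1 - α) ^ 2 -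
              (1 - α) * ∑ i, lam i * (1 - Function.update x j v i) / mu i)) := by
  obtain ⟨hα0, hα1⟩ := hα
  have hm := hmu j
  have hL := hlam j
  obtain ⟨c3, hc3def⟩ : ∃ y, y = lam j / mu j := ⟨_, rfl⟩
  obtain ⟨c1, hc1def⟩ : ∃ y, y = lam j / mu j ^ 2 := ⟨_, rfl⟩
  have hc3 : 0 < c3 := hc3def ▸ div_pos hL hm
  have hc1 : 0 < c1 := hc1def ▸ div_pos hL (by positivity)
  obtain ⟨K1, hK1def⟩ : ∃ y, y = ∑ i ∈ Finset.univ.erase j, lam i * x i / mu i ^ 2 := ⟨_, rfl⟩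
  obtain ⟨K2, hK2def⟩ : ∃ y, y = ∑ i ∈ Finset.univ.erase j, lam i * x i := ⟨_, rfl⟩
  obtain ⟨K3, hK3def⟩ : ∃ y, y = ∑ i ∈ Finset.univ.erase j, lam i * x i / mu i := ⟨_, rfl⟩
  obtain ⟨T1, hT1def⟩ : ∃ y, y = ∑ i, lam i / mu i ^ 2 := ⟨_, rfl⟩
  obtain ⟨T2, hT2def⟩ : ∃ y, y = ∑ i, lam i := ⟨_, rfl⟩
  obtain ⟨T3, hT3def⟩ : ∃ y, y = ∑ i, lam i / mu i := ⟨_, rfl⟩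
  -- general update-sum lemma
  have hupd : ∀ (g : Fin n → ℝ) (v : ℝ),
      ∑ i, g i * Function.update x j v i =
        g j * v + ∑ i ∈ Finset.univ.erase j, g i * x i := by
    intro g v
    rw [← Finset.add_sum_erase Finset.univ (fun i => g i * Function.update x j v i)
      (Finset.mem_univ j)]
    congr 1
    · rw [Function.update_self]
    · exact Finset.sum_congr rfl fun i hi => by
        rw [Function.update_of_ne (Finset.ne_of_mem_erase hi)]
  have h1 : ∀ v : ℝ, ∑ i, lam i * Function.update x j v i / mu i ^ 2 = K1 + c1 * v := by
    intro v
    calc ∑ i, lam i * Function.update x j v i / mu i ^ 2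
        = ∑ i, (lam i / mu i ^ 2) * Function.update x j v i :=
          Finset.sum_congr rfl fun i _ => by ring
      _ = (lam j / mu j ^ 2) * v + ∑ i ∈ Finset.univ.erase j, (lam i / mu i ^ 2) * x i :=
          hupd _ v
      _ = K1 + c1 * v := by
          rw [hK1def, hc1def, add_comm]
          congr 1
          exact Finset.sum_congr rfl fun i _ => by ring
  have h2 : ∀ v : ℝ, ∑ i, lam i * Function.update x j v i = K2 + lam j * v := by
    intro v
    rw [hupd lam v, add_comm, hK2def]
  have h3 : ∀ v : ℝ, ∑ i, lam i * Function.update x j v i / mu i = K3 + c3 * v := by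
    intro v
    calc ∑ i, lam i * Function.update x j v i / mu i
        = ∑ i, (lam i / mu i) * Function.update x j v i :=
          Finset.sum_congr rfl fun i _ => by ring
      _ = (lam j / mu j) * v + ∑ i ∈ Finset.univ.erase j, (lam i / mu i) * x i := hupd _ v
      _ = K3 + c3 * v := by
          rw [hK3def, hc3def, add_comm]
          congr 1
          exact Finset.sum_congr rfl fun i _ => by ring
  have h1' : ∀ v : ℝ, ∑ i, lam i * (1 - Function.update x j v i) / mu i ^ 2
      = T1 - (K1 + c1 * v) := by
    intro v
    rw [← h1 v, hT1def, ← Finset.sum_sub_distrib]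
    exact Finset.sum_congr rfl fun i _ => by ring
  have h2' : ∀ v : ℝ, ∑ i, lam i * (1 - Function.update x j v i)
      = T2 - (K2 + lam j * v) := by
    intro v
    rw [← h2 v, hT2def, ← Finset.sum_sub_distrib]
    exact Finset.sum_congr rfl fun i _ => by ring
  have h3' : ∀ v : ℝ, ∑ i, lam i * (1 - Function.update x j v i) / mu i
      = T3 - (K3 + c3 * v) := by
    intro v
    rw [← h3 v, hT3def, ← Finset.sum_sub_distrib]
    exact Finset.sum_congr rfl fun i _ => by ring
  -- rewrite the set
  have hSeq : {v : ℝ | v ∈ Set.Icc (0 : ℝ) 1 ∧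
        (∑ i, lam i * Function.update x j v i / mu i) < α ∧
        (∑ i, lam i * (1 - Function.update x j v i) / mu i) < 1 - α} =
      {v : ℝ | 0 ≤ v ∧ v ≤ 1 ∧ K3 + c3 * v < α ∧ T3 - (K3 + c3 * v) < 1 - α} := by
    ext v
    simp only [Set.mem_setOf_eq, Set.mem_Icc, h3 v, h3' v]
    tauto
  -- rewrite the function
  have hfeq : (fun v : ℝ =>
        (∑ i, lam i * Function.update x j v i / (mu i) ^ 2) *
            (∑ i, lam i * Function.update x j v i) /
            (α ^ 2 - α * ∑ i, lam i * Function.update x j v i / mu i) +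
          (∑ i, lam i * (1 - Function.update x j v i) / (mu i) ^ 2) *
            (∑ i, lam i * (1 - Function.update x j v i)) /
            ((1 - α) ^ 2 -
              (1 - α) * ∑ i, lam i * (1 - Function.update x j v i) / mu i)) =
      (fun v : ℝ =>
        (K1 + c1 * v) * (K2 + lam j * v) / ((α ^ 2 - α * K3) + (-(α * c3)) * v) +
        ((T1 - K1) + (-c1) * v) * ((T2 - K2) + (-(lam j)) * v) /
          (((1 - α) ^ 2 - (1 - α) * (T3 - K3)) + ((1 - α) * c3) * v)) := by
    funext v
    rw [h1 v, h2 v, h3 v, h1' v, h2' v, h3' v]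
    have e1 : α ^ 2 - α * (K3 + c3 * v) = (α ^ 2 - α * K3) + (-(α * c3)) * v := by ring
    have e2 : (1 - α) ^ 2 - (1 - α) * (T3 - (K3 + c3 * v)) =
        ((1 - α) ^ 2 - (1 - α) * (T3 - K3)) + ((1 - α) * c3) * v := by ring
    have e3 : T1 - (K1 + c1 * v) = (T1 - K1) + (-c1) * v := by ring
    have e4 : T2 - (K2 + lam j * v) = (T2 - K2) + (-(lam j)) * v := by ring
    rw [e1, e2, e3, e4]
  rw [hSeq, hfeq]
  set S := {v : ℝ | 0 ≤ v ∧ v ≤ 1 ∧ K3 + c3 * v < α ∧ T3 - (K3 + c3 * v) < 1 - α}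
    with hSdef
  have hconvS : Convex ℝ S := by
    intro p hp q hq a b ha hb hab
    obtain ⟨hp0, hp1, hp2, hp3⟩ := hp
    obtain ⟨hq0, hq1, hq2, hq3⟩ := hq
    have hb' : b = 1 - a := by linarith
    subst hb'
    refine ⟨add_nonneg (mul_nonneg ha hp0) (mul_nonneg hb hq0), ?_, ?_, ?_⟩
    · simp only [smul_eq_mul]
      nlinarith [mul_le_mul_of_nonneg_left hp1 ha, mul_le_mul_of_nonneg_left hq1 hb]
    · have := comb_lt_aux hp2 hq2 ha hb hab
      simp only [smul_eq_mul]
      nlinarith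
    · have := comb_lt_aux hp3 hq3 ha hb hab
      simp only [smul_eq_mul]
      nlinarith
  by_cases hne : S.Nonempty
  · obtain ⟨v₀, hv₀⟩ := hne
    obtain ⟨hv0, hv1, hv2, hv3⟩ := hv₀
    have hK3α : K3 < α := by nlinarith [mul_nonneg hc3.le hv0]
    have hTK3 : T3 - K3 - c3 < 1 - α := by
      nlinarith [mul_le_mul_of_nonneg_left hv1 hc3.le]
    -- nonnegativity facts
    have hK1 : 0 ≤ K1 := hK1def ▸ Finset.sum_nonneg fun i hi => by
      have hxi := hx i (Finset.ne_of_mem_erase hi)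
      exact div_nonneg (mul_nonneg (hlam i).le hxi.1) (by positivity)
    have hK2 : 0 ≤ K2 := hK2def ▸ Finset.sum_nonneg fun i hi => by
      have hxi := hx i (Finset.ne_of_mem_erase hi)
      exact mul_nonneg (hlam i).le hxi.1
    have hT1K1 : c1 ≤ T1 - K1 := by
      have hKle : K1 ≤ ∑ i ∈ Finset.univ.erase j, lam i / mu i ^ 2 := by
        rw [hK1def]
        refine Finset.sum_le_sum fun i hi => ?_
        have hxi := hx i (Finset.ne_of_mem_erase hi)
        have h := mul_le_of_le_one_right (hlam i).le hxi.2
        exact (div_le_div_iff_of_pos_right (pow_pos (hmu i) 2)).2 h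
      have hse : ∑ i ∈ Finset.univ.erase j, lam i / mu i ^ 2 = T1 - c1 := by
        rw [hT1def, hc1def, ← Finset.add_sum_erase Finset.univ
          (fun i => lam i / mu i ^ 2) (Finset.mem_univ j)]
        ring
      linarith
    have hT2K2 : lam j ≤ T2 - K2 := by
      have hKle : K2 ≤ ∑ i ∈ Finset.univ.erase j, lam i := by
        rw [hK2def]
        exact Finset.sum_le_sum fun i hi =>
          mul_le_of_le_one_right (hlam i).le (hx i (Finset.ne_of_mem_erase hi)).2
      have hse : ∑ i ∈ Finset.univ.erase j, lam i = T2 - lam j := by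
        rw [hT2def, ← Finset.add_sum_erase Finset.univ lam (Finset.mem_univ j)]
        ring
      linarith
    refine ConvexOn.add
      (keylem_aux K1 c1 K2 (lam j) (α ^ 2 - α * K3) (-(α * c3)) S hconvS ?_ ?_)
      (keylem_aux (T1 - K1) (-c1) (T2 - K2) (-(lam j))
        ((1 - α) ^ 2 - (1 - α) * (T3 - K3)) ((1 - α) * c3) S hconvS ?_ ?_)
    · intro v hv
      obtain ⟨_, _, hv2', _⟩ := hv
      nlinarith [mul_pos hα0 (show (0:ℝ) < α - (K3 + c3 * v) by linarith)]
    · have f1 : 0 ≤ c1 * (α ^ 2 - α * K3) - K1 * (-(α * c3)) := by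
        nlinarith [mul_nonneg (mul_nonneg hc1.le hα0.le) (by linarith : (0:ℝ) ≤ α - K3),
          mul_nonneg (mul_nonneg hK1 hα0.le) hc3.le]
      have f2 : 0 ≤ lam j * (α ^ 2 - α * K3) - K2 * (-(α * c3)) := by
        nlinarith [mul_nonneg (mul_nonneg hL.le hα0.le) (by linarith : (0:ℝ) ≤ α - K3),
          mul_nonneg (mul_nonneg hK2 hα0.le) hc3.le]
      exact mul_nonneg f1 f2
    · intro v hv
      obtain ⟨_, _, _, hv3'⟩ := hv
      nlinarith [mul_pos (show (0:ℝ) < 1 - α by linarith)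
        (show (0:ℝ) < (1 - α) - (T3 - (K3 + c3 * v)) by linarith)]
    · have hbr1 : 0 ≤ c1 * ((1 - α) - (T3 - K3)) + (T1 - K1) * c3 := by
        nlinarith [mul_le_mul_of_nonneg_left
            (show -c3 ≤ (1 - α) - (T3 - K3) by linarith) hc1.le,
          mul_le_mul_of_nonneg_right hT1K1 hc3.le]
      have hbr2 : 0 ≤ lam j * ((1 - α) - (T3 - K3)) + (T2 - K2) * c3 := by
        nlinarith [mul_le_mul_of_nonneg_left
            (show -c3 ≤ (1 - α) - (T3 - K3) by linarith) hL.le,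
          mul_le_mul_of_nonneg_right hT2K2 hc3.le]
      have f1 : (-c1) * ((1 - α) ^ 2 - (1 - α) * (T3 - K3)) -
          (T1 - K1) * ((1 - α) * c3) ≤ 0 := by
        nlinarith [mul_nonneg (show (0:ℝ) ≤ 1 - α by linarith) hbr1]
      have f2 : (-(lam j)) * ((1 - α) ^ 2 - (1 - α) * (T3 - K3)) -
          (T2 - K2) * ((1 - α) * c3) ≤ 0 := by
        nlinarith [mul_nonneg (show (0:ℝ) ≤ 1 - α by linarith) hbr2]
      nlinarith [mul_nonneg (neg_nonneg.mpr f1) (neg_nonneg.mpr f2)]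
  · rw [Set.not_nonempty_iff_eq_empty] at hne
    rw [hne]
    exact ⟨convex_empty, fun v hv => absurd hv (Set.notMem_empty v)⟩
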